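/- arXiv:2503.11823 — 2 statements merged into one kernel-verified Lean document; each statement's English description precedes it below -/
import Mathlib

section
/- Suppose z ∈ ℂ, z ≠ 0, the matrix (z+z⁻¹)·1_M − D is invertible, and Q(z) and Q(z⁻¹) are invertible. Then γ(z) · [[𝕊(z), 0],[z⁻¹·Ψ(z), −z⁻²·1_M]] = −γ(z⁻¹), where the matrix in brackets is written in block form with respect to the decomposition ℂ^{N+M} = ℂ^N ⊕ ℂ^M. In particular, whenever γ(z) is also invertible, −γ(z)⁻¹·γ(z⁻¹) = [[𝕊(z), 0],[z⁻¹·Ψ(z), −z⁻²·1_M]]. -/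
open Matrix

/-- `F(z) := A + B† ((z+z⁻¹)·1_M − D)⁻¹ B`. -/
noncomputable def Fmat {N M : ℕ} (A : Matrix (Fin N) (Fin N) ℂ)
    (B : Matrix (Fin M) (Fin N) ℂ) (D : Matrix (Fin M) (Fin M) ℂ) (z : ℂ) :
    Matrix (Fin N) (Fin N) ℂ :=
  A + Bᴴ * ((z + z⁻¹) • (1 : Matrix (Fin M) (Fin M) ℂ) - D)⁻¹ * B

/-- `Q(z) := 1_N − z·F(z)`. -/
noncomputable def Qmat {N M : ℕ} (A : Matrix (Fin N) (Fin N) ℂ)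
    (B : Matrix (Fin M) (Fin N) ℂ) (D : Matrix (Fin M) (Fin M) ℂ) (z : ℂ) :
    Matrix (Fin N) (Fin N) ℂ :=
  1 - z • Fmat A B D z

/-- `𝕊(z) := −Q(z⁻¹)·Q(z)⁻¹`. -/
noncomputable def Smat {N M : ℕ} (A : Matrix (Fin N) (Fin N) ℂ)
    (B : Matrix (Fin M) (Fin N) ℂ) (D : Matrix (Fin M) (Fin M) ℂ) (z : ℂ) :
    Matrix (Fin N) (Fin N) ℂ :=
  -(Qmat A B D z⁻¹) * (Qmat A B D z)⁻¹

/-- `Ψ(z) := ((z+z⁻¹)·1_M − D)⁻¹·B·(z⁻¹·1_N + z·𝕊(z))`. -/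
noncomputable def PsiMat {N M : ℕ} (A : Matrix (Fin N) (Fin N) ℂ)
    (B : Matrix (Fin M) (Fin N) ℂ) (D : Matrix (Fin M) (Fin M) ℂ) (z : ℂ) :
    Matrix (Fin M) (Fin N) ℂ :=
  ((z + z⁻¹) • (1 : Matrix (Fin M) (Fin M) ℂ) - D)⁻¹ * B *
    (z⁻¹ • (1 : Matrix (Fin N) (Fin N) ℂ) + z • Smat A B D z)

/-- `H_G := [[A, B†],[B, D]]`. -/
def HGmat {N M : ℕ} (A : Matrix (Fin N) (Fin N) ℂ)
    (B : Matrix (Fin M) (Fin N) ℂ) (D : Matrix (Fin M) (Fin M) ℂ) :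
    Matrix (Fin N ⊕ Fin M) (Fin N ⊕ Fin M) ℂ :=
  fromBlocks A Bᴴ B D

/-- `P_M`, the diagonal projection onto the last `M` coordinates. -/
def PMmat (N M : ℕ) : Matrix (Fin N ⊕ Fin M) (Fin N ⊕ Fin M) ℂ :=
  fromBlocks 0 0 0 1

/-- `γ(z) := −z²·P_M + z·H_G − 1`. -/
noncomputable def gammaMat {N M : ℕ} (A : Matrix (Fin N) (Fin N) ℂ)
    (B : Matrix (Fin M) (Fin N) ℂ) (D : Matrix (Fin M) (Fin M) ℂ) (z : ℂ) :
    Matrix (Fin N ⊕ Fin M) (Fin N ⊕ Fin M) ℂ :=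
  -(z ^ 2) • PMmat N M + z • HGmat A B D - 1

private theorem gamma_blocks_aux {N M : ℕ}
    (A : Matrix (Fin N) (Fin N) ℂ) (B : Matrix (Fin M) (Fin N) ℂ)
    (D : Matrix (Fin M) (Fin M) ℂ) (w : ℂ) :
    gammaMat A B D w = fromBlocks (w • A - 1) (w • Bᴴ) (w • B) (w • D - (w^2+1) • 1) := by
  unfold gammaMat HGmat PMmat
  rw [fromBlocks_smul, fromBlocks_smul, ← fromBlocks_one (l := Fin N) (m := Fin M),
    fromBlocks_add, sub_eq_add_neg, fromBlocks_neg, fromBlocks_add]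
  refine fromBlocks_inj.mpr ⟨?_, ?_, ?_, ?_⟩ <;> module

/-- `γ(z)·[[𝕊(z), 0],[z⁻¹Ψ(z), −z⁻²·1_M]] = −γ(z⁻¹)`, and when `γ(z)` is
invertible, `−γ(z)⁻¹·γ(z⁻¹) = [[𝕊(z), 0],[z⁻¹Ψ(z), −z⁻²·1_M]]`. -/
theorem gamma_S_Psi_relation {N M : ℕ} (hN : 0 < N) (hM : 0 < M)
    (A : Matrix (Fin N) (Fin N) ℂ) (B : Matrix (Fin M) (Fin N) ℂ)
    (D : Matrix (Fin M) (Fin M) ℂ) (z : ℂ) (hz : z ≠ 0)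
    (hD : IsUnit ((z + z⁻¹) • (1 : Matrix (Fin M) (Fin M) ℂ) - D))
    (hQ : IsUnit (Qmat A B D z)) (hQ' : IsUnit (Qmat A B D z⁻¹)) :
    gammaMat A B D z *
        fromBlocks (Smat A B D z) 0 (z⁻¹ • PsiMat A B D z)
          (-(z ^ 2)⁻¹ • (1 : Matrix (Fin M) (Fin M) ℂ)) =
      -(gammaMat A B D z⁻¹) ∧
    (IsUnit (gammaMat A B D z) →
      -((gammaMat A B D z)⁻¹ * gammaMat A B D z⁻¹) =
        fromBlocks (Smat A B D z) 0 (z⁻¹ • PsiMat A B D z)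
          (-(z ^ 2)⁻¹ • (1 : Matrix (Fin M) (Fin M) ℂ))) := by
  have hmain : gammaMat A B D z *
      fromBlocks (Smat A B D z) 0 (z⁻¹ • PsiMat A B D z)
        (-(z ^ 2)⁻¹ • (1 : Matrix (Fin M) (Fin M) ℂ)) = -(gammaMat A B D z⁻¹) := by
    have hWu : IsUnit ((z + z⁻¹) • (1 : Matrix (Fin M) (Fin M) ℂ) - D).det :=
      (Matrix.isUnit_iff_isUnit_det _).mp hD
    have hW1 : ((z + z⁻¹) • (1 : Matrix (Fin M) (Fin M) ℂ) - D) *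
        ((z + z⁻¹) • (1 : Matrix (Fin M) (Fin M) ℂ) - D)⁻¹ = 1 :=
      Matrix.mul_nonsing_inv _ hWu
    set W : Matrix (Fin M) (Fin M) ℂ := (z + z⁻¹) • 1 - D with hWdef
    have hWW : ∀ (Y : Matrix (Fin M) (Fin N) ℂ), W * (W⁻¹ * Y) = Y := fun Y => by
      rw [← Matrix.mul_assoc, hW1, Matrix.one_mul]
    have hF' : Fmat A B D z⁻¹ = Fmat A B D z := by
      unfold Fmat
      rw [show z⁻¹ + (z⁻¹)⁻¹ = z + z⁻¹ by rw [inv_inv, add_comm]]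
    have hQS : Qmat A B D z * Smat A B D z = -(Qmat A B D z⁻¹) := by
      have hcomm : Qmat A B D z * Qmat A B D z⁻¹ = Qmat A B D z⁻¹ * Qmat A B D z := by
        unfold Qmat
        rw [hF']
        simp only [mul_sub, sub_mul, Matrix.smul_mul, Matrix.mul_smul, smul_smul, one_mul,
          mul_one]
        rw [mul_comm z z⁻¹]; abel
      rw [Smat, neg_mul, mul_neg, ← mul_assoc, hcomm, mul_assoc,
        Matrix.mul_nonsing_inv _ ((Matrix.isUnit_iff_isUnit_det _).mp hQ), mul_one]
    have h : (1 - z • (A + Bᴴ * W⁻¹ * B)) * Smat A B D z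
        = -(1 - z⁻¹ • (A + Bᴴ * W⁻¹ * B)) := by
      have h0 := hQS
      rw [Qmat, Qmat, hF'] at h0
      exact h0
    set S := Smat A B D z with hSdef
    rw [gamma_blocks_aux, gamma_blocks_aux, fromBlocks_neg, PsiMat, fromBlocks_multiply, ← hSdef,
      ← hWdef]
    refine fromBlocks_inj.mpr ⟨?_, ?_, ?_, ?_⟩
    · -- top-left
      have e : (z • A - 1) * S + (z • Bᴴ) * (z⁻¹ • (W⁻¹ * B * (z⁻¹ • 1 + z • S)))
          - -(z⁻¹ • A - 1)
          = -((1 - z • (A + Bᴴ * W⁻¹ * B)) * S - -(1 - z⁻¹ • (A + Bᴴ * W⁻¹ * B))) := by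
        simp only [Matrix.mul_add, Matrix.add_mul, Matrix.sub_mul, Matrix.mul_sub,
          Matrix.smul_mul, Matrix.mul_smul, smul_smul, smul_add, smul_sub, Matrix.one_mul,
          Matrix.mul_one, Matrix.mul_assoc, neg_sub, neg_neg, neg_add]
        match_scalars <;> field_simp
      have e0 : (1 - z • (A + Bᴴ * W⁻¹ * B)) * S - -(1 - z⁻¹ • (A + Bᴴ * W⁻¹ * B)) = 0 :=
        sub_eq_zero.mpr h
      have e1 := e.trans (by rw [e0, neg_zero])
      exact sub_eq_zero.mp e1
    · -- top-right
      simp only [Matrix.mul_zero, zero_add, Matrix.smul_mul, Matrix.mul_smul, smul_smul,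
        Matrix.mul_one]
      match_scalars
      field_simp
    · -- bottom-left
      rw [show z • D - (z^2+1) • (1 : Matrix (Fin M) (Fin M) ℂ) = (-z) • W by
        rw [hWdef]; match_scalars <;> field_simp <;> ring]
      simp only [Matrix.mul_add, Matrix.add_mul, Matrix.smul_mul, Matrix.mul_smul, smul_smul,
        smul_add, Matrix.one_mul, Matrix.mul_one, Matrix.mul_assoc, hWW]
      match_scalars <;> field_simp <;> ring
    · -- bottom-right
      simp only [Matrix.zero_mul, Matrix.mul_zero, zero_add, Matrix.sub_mul, Matrix.smul_mul,
        Matrix.mul_smul, smul_smul, smul_sub, Matrix.mul_one, Matrix.one_mul, neg_sub]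
      match_scalars <;> field_simp <;> ring
  refine ⟨hmain, fun hγ => ?_⟩
  have hγd : IsUnit (gammaMat A B D z).det := (Matrix.isUnit_iff_isUnit_det _).mp hγ
  rw [show gammaMat A B D z⁻¹ = -(gammaMat A B D z *
      fromBlocks (Smat A B D z) 0 (z⁻¹ • PsiMat A B D z)
        (-(z ^ 2)⁻¹ • (1 : Matrix (Fin M) (Fin M) ℂ))) by rw [hmain, neg_neg]]
  rw [mul_neg, neg_neg, ← Matrix.mul_assoc, Matrix.nonsing_inv_mul _ hγd, Matrix.one_mul]
end

section
/- Assume A, B, D have real entries with A = Aᵀ and D = Dᵀ. Let z ∈ ℂ with |z| = 1, and suppose (z+z⁻¹)·1_M − D, Q(z), Q(z⁻¹), γ(z) and γ(z⁻¹) are all invertible. Then for all indices 1 ≤ u, v ≤ M: (Ψ(z)·Ψ(z)†)_{u v} = (z² − 1)(z⁻² − 1) · (γ(z)⁻¹ · P_N · γ(z⁻¹)⁻¹)_{N+u, N+v}. -/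
open Matrix

/-- `P_N := 1 − P_M`, the diagonal projection onto the first `N` coordinates. -/
def PNmat (N M : ℕ) : Matrix (Fin N ⊕ Fin M) (Fin N ⊕ Fin M) ℂ :=
  1 - PMmat N M

section Aux

variable {N M : ℕ} (A : Matrix (Fin N) (Fin N) ℂ) (B : Matrix (Fin M) (Fin N) ℂ)
  (D : Matrix (Fin M) (Fin M) ℂ)

lemma gamma_blocks (w : ℂ) (hw : w ≠ 0) :
    gammaMat A B D w =
      fromBlocks (w • A - 1) (w • Bᴴ) (w • B)
        (-w • ((w + w⁻¹) • (1 : Matrix (Fin M) (Fin M) ℂ) - D)) := by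
  ext i j
  have hww : w * w⁻¹ = 1 := mul_inv_cancel₀ hw
  rcases i with i | i <;> rcases j with j | j
  · by_cases h : i = j <;>
      simp [gammaMat, PMmat, HGmat, Matrix.one_apply, h]
  · simp [gammaMat, PMmat, HGmat, Matrix.one_apply]
  · simp [gammaMat, PMmat, HGmat, Matrix.one_apply]
  · by_cases h : i = j <;>
      simp [gammaMat, PMmat, HGmat, Matrix.one_apply, h, mul_sub, mul_add, hww] <;> ring

lemma gamma_inv_blocks (w : ℂ) (hw : w ≠ 0)
    (hK : IsUnit ((w + w⁻¹) • (1 : Matrix (Fin M) (Fin M) ℂ) - D))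
    (hQu : IsUnit (Qmat A B D w)) :
    (gammaMat A B D w)⁻¹ =
      fromBlocks (-(Qmat A B D w)⁻¹)
        (-((Qmat A B D w)⁻¹ * Bᴴ * ((w + w⁻¹) • (1 : Matrix (Fin M) (Fin M) ℂ) - D)⁻¹))
        (-(((w + w⁻¹) • (1 : Matrix (Fin M) (Fin M) ℂ) - D)⁻¹ * B * (Qmat A B D w)⁻¹))
        (-w⁻¹ • ((w + w⁻¹) • (1 : Matrix (Fin M) (Fin M) ℂ) - D)⁻¹ -
          ((w + w⁻¹) • (1 : Matrix (Fin M) (Fin M) ℂ) - D)⁻¹ * B * (Qmat A B D w)⁻¹ * Bᴴ *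
            ((w + w⁻¹) • (1 : Matrix (Fin M) (Fin M) ℂ) - D)⁻¹) := by
  have hww : w * w⁻¹ = 1 := mul_inv_cancel₀ hw
  set K : Matrix (Fin M) (Fin M) ℂ := (w + w⁻¹) • (1 : Matrix (Fin M) (Fin M) ℂ) - D with hKdef
  have hKKi : K * K⁻¹ = 1 := Matrix.mul_nonsing_inv _ ((Matrix.isUnit_iff_isUnit_det _).mp hK)
  have hQQi : Qmat A B D w * (Qmat A B D w)⁻¹ = 1 :=
    Matrix.mul_nonsing_inv _ ((Matrix.isUnit_iff_isUnit_det _).mp hQu)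
  set Ki := K⁻¹ with hKidef
  set Qi := (Qmat A B D w)⁻¹ with hQidef
  have hexp : Qi - w • (A * Qi) - w • (Bᴴ * Ki * B * Qi) = 1 := by
    conv_rhs => rw [← hQQi]
    show Qi - w • (A * Qi) - w • (Bᴴ * Ki * B * Qi) =
      (1 - w • (A + Bᴴ * Ki * B)) * Qi
    simp only [Matrix.sub_mul, Matrix.add_mul, Matrix.one_mul, Matrix.smul_mul, smul_add]
    module
  apply Matrix.inv_eq_right_inv
  rw [gamma_blocks A B D w hw, ← hKdef, fromBlocks_multiply]
  have h11 : (w • A - 1) * -Qi + w • Bᴴ * -(Ki * B * Qi) = 1 := by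
    conv_rhs => rw [← hexp]
    simp only [Matrix.mul_neg, Matrix.smul_mul, Matrix.sub_mul, Matrix.one_mul,
      ← Matrix.mul_assoc]
    module
  have h21 : w • B * -Qi + -w • K * -(Ki * B * Qi) = 0 := by
    simp only [Matrix.mul_neg, Matrix.smul_mul, Matrix.neg_mul, neg_neg, neg_smul, smul_neg,
      ← Matrix.mul_assoc, hKKi, Matrix.one_mul]
    module
  have h12 : (w • A - 1) * -(Qi * Bᴴ * Ki) + w • Bᴴ * (-w⁻¹ • Ki - Ki * B * Qi * Bᴴ * Ki) = 0 := by
    have h2 : (Qi - w • (A * Qi) - w • (Bᴴ * Ki * B * Qi)) * (Bᴴ * Ki) = Bᴴ * Ki := by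
      rw [hexp, Matrix.one_mul]
    simp only [Matrix.sub_mul, Matrix.smul_mul, ← Matrix.mul_assoc] at h2
    rw [← sub_eq_zero] at h2
    conv_rhs => rw [← h2]
    simp only [Matrix.mul_neg, Matrix.mul_sub, Matrix.smul_mul, Matrix.mul_smul, Matrix.sub_mul,
      Matrix.one_mul, ← Matrix.mul_assoc, smul_smul, neg_smul, smul_neg, neg_neg, one_smul]
    match_scalars <;> field_simp
  have h22 : w • B * -(Qi * Bᴴ * Ki) + -w • K * (-w⁻¹ • Ki - Ki * B * Qi * Bᴴ * Ki) = 1 := by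
    simp only [Matrix.mul_neg, Matrix.mul_sub, Matrix.smul_mul, Matrix.mul_smul, Matrix.neg_mul,
      neg_neg, neg_smul, smul_neg, smul_smul, ← Matrix.mul_assoc, hKKi, Matrix.one_mul,
      one_smul]
    match_scalars <;> field_simp <;> ring
  rw [h11, h12, h21, h22, ← fromBlocks_one]

lemma psi_mul (z : ℂ) (habs : ‖z‖ = 1)
    (hAre : ∀ i j, (A i j).im = 0) (hDre : ∀ i j, (D i j).im = 0)
    (hAsym : Aᵀ = A) (hDsym : Dᵀ = D)
    (hQ : IsUnit (Qmat A B D z)) :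
    PsiMat A B D z * (PsiMat A B D z)ᴴ =
      ((z⁻¹ - z) * (z - z⁻¹)) •
        (((z + z⁻¹) • (1 : Matrix (Fin M) (Fin M) ℂ) - D)⁻¹ * B * (Qmat A B D z)⁻¹ *
          ((Qmat A B D z⁻¹)⁻¹ * Bᴴ * ((z + z⁻¹) • (1 : Matrix (Fin M) (Fin M) ℂ) - D)⁻¹)) := by
  have hz : z ≠ 0 := by
    intro h; rw [h] at habs; simp at habs
  have hcz : (starRingEnd ℂ) z = z⁻¹ := by
    have h1 : z * (starRingEnd ℂ) z = 1 := by
      rw [Complex.mul_conj, ← Complex.sq_norm, habs]; norm_num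
    field_simp at h1 ⊢
    linear_combination h1
  have hcz' : (starRingEnd ℂ) z⁻¹ = z := by
    rw [map_inv₀, hcz, inv_inv]
  set K : Matrix (Fin M) (Fin M) ℂ := (z + z⁻¹) • (1 : Matrix (Fin M) (Fin M) ℂ) - D with hKdef
  have hDH : Dᴴ = D := by
    ext i j
    have h1 : D j i = D i j := by
      conv_lhs => rw [← hDsym]
      rfl
    rw [conjTranspose_apply, h1, RCLike.star_def]
    exact Complex.conj_eq_iff_im.mpr (hDre i j)
  have hAH : Aᴴ = A := by
    ext i j
    have h1 : A j i = A i j := by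
      conv_lhs => rw [← hAsym]
      rfl
    rw [conjTranspose_apply, h1, RCLike.star_def]
    exact Complex.conj_eq_iff_im.mpr (hAre i j)
  have hKH : Kᴴ = K := by
    rw [hKdef, conjTranspose_sub, conjTranspose_smul, conjTranspose_one, hDH]
    congr 1
    rw [star_add]
    simp only [RCLike.star_def, hcz, hcz']
    rw [add_comm]
  have hKiH : (K⁻¹)ᴴ = K⁻¹ := by rw [conjTranspose_nonsing_inv, hKH]
  have hFz : Fmat A B D z⁻¹ = Fmat A B D z := by
    unfold Fmat; rw [inv_inv, add_comm z⁻¹ z]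
  have hFH : (Fmat A B D z)ᴴ = Fmat A B D z := by
    unfold Fmat
    rw [← hKdef, conjTranspose_add, hAH, conjTranspose_mul, conjTranspose_mul,
      conjTranspose_conjTranspose, hKiH, Matrix.mul_assoc]
  have hQH : (Qmat A B D z)ᴴ = Qmat A B D z⁻¹ := by
    unfold Qmat
    rw [conjTranspose_sub, conjTranspose_one, conjTranspose_smul, RCLike.star_def, hcz,
      hFH, hFz]
  have hQQi : Qmat A B D z * (Qmat A B D z)⁻¹ = 1 :=
    Matrix.mul_nonsing_inv _ ((Matrix.isUnit_iff_isUnit_det _).mp hQ)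
  set Qi := (Qmat A B D z)⁻¹ with hQidef
  set Qi' := (Qmat A B D z⁻¹)⁻¹ with hQi'def
  have hW : z⁻¹ • (1 : Matrix (Fin N) (Fin N) ℂ) + z • Smat A B D z = (z⁻¹ - z) • Qi := by
    unfold Smat
    rw [Matrix.neg_mul, ← hQidef]
    conv_lhs => rw [← hQQi]
    show z⁻¹ • ((1 - z • Fmat A B D z) * Qi) + z • -((1 - z⁻¹ • Fmat A B D z⁻¹) * Qi) =
      (z⁻¹ - z) • Qi
    rw [hFz]
    simp only [Matrix.sub_mul, Matrix.one_mul, Matrix.smul_mul, smul_sub, smul_smul, smul_neg]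
    match_scalars <;> field_simp <;> ring
  have hPsi : PsiMat A B D z = (z⁻¹ - z) • (K⁻¹ * B * Qi) := by
    unfold PsiMat
    rw [← hKdef, hW, Matrix.mul_smul]
  have hQiH : (Qi)ᴴ = Qi' := by
    rw [hQidef, conjTranspose_nonsing_inv, hQH]
  have hstar : star (z⁻¹ - z) = z - z⁻¹ := by
    rw [RCLike.star_def, map_sub, hcz, hcz']
  have hPsiH : (PsiMat A B D z)ᴴ = (z - z⁻¹) • (Qi' * Bᴴ * K⁻¹) := by
    rw [hPsi, conjTranspose_smul, conjTranspose_mul, conjTranspose_mul, hKiH, hQiH, hstar,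
      ← Matrix.mul_assoc]
  rw [hPsiH, hPsi]
  simp only [Matrix.smul_mul, Matrix.mul_smul, smul_smul, Matrix.mul_assoc]
  congr 1
  ring

end Aux

/-- for real symmetric data and `|z| = 1`, the internal-vertex matrix
elements of `Ψ(z)·Ψ(z)†` equal `(z² − 1)(z⁻² − 1)` times those of
`γ(z)⁻¹·P_N·γ(z⁻¹)⁻¹`. -/
theorem PsiPsiDagger_gamma {N M : ℕ} (hN : 0 < N) (hM : 0 < M)
    (A : Matrix (Fin N) (Fin N) ℂ) (B : Matrix (Fin M) (Fin N) ℂ)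
    (D : Matrix (Fin M) (Fin M) ℂ)
    (hAre : ∀ i j, (A i j).im = 0) (hBre : ∀ i j, (B i j).im = 0)
    (hDre : ∀ i j, (D i j).im = 0)
    (hAsym : Aᵀ = A) (hDsym : Dᵀ = D)
    (z : ℂ) (habs : ‖z‖ = 1)
    (hD : IsUnit ((z + z⁻¹) • (1 : Matrix (Fin M) (Fin M) ℂ) - D))
    (hQ : IsUnit (Qmat A B D z)) (hQ' : IsUnit (Qmat A B D z⁻¹))
    (hγ : IsUnit (gammaMat A B D z)) (hγ' : IsUnit (gammaMat A B D z⁻¹)) :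
    ∀ u v : Fin M,
      (PsiMat A B D z * (PsiMat A B D z)ᴴ) u v =
        (z ^ 2 - 1) * ((z ^ 2)⁻¹ - 1) *
          (((gammaMat A B D z)⁻¹ * PNmat N M * (gammaMat A B D z⁻¹)⁻¹)
            (Sum.inr u) (Sum.inr v)) := by
  intro u v
  have hz : z ≠ 0 := by
    intro h; rw [h] at habs; simp at habs
  set K : Matrix (Fin M) (Fin M) ℂ := (z + z⁻¹) • (1 : Matrix (Fin M) (Fin M) ℂ) - D with hKdef
  set Qi := (Qmat A B D z)⁻¹ with hQidef
  set Qi' := (Qmat A B D z⁻¹)⁻¹ with hQi'def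
  have hKeq : (z⁻¹ + (z⁻¹)⁻¹) • (1 : Matrix (Fin M) (Fin M) ℂ) - D = K := by
    rw [hKdef, inv_inv, add_comm]
  have hγz := gamma_inv_blocks A B D z hz hD hQ
  have hγz' := gamma_inv_blocks A B D z⁻¹ (inv_ne_zero hz) (by rw [hKeq]; exact hD) hQ'
  rw [hKeq] at hγz'
  have hPN : PNmat N M = fromBlocks 1 0 0 0 := by
    ext i j
    rcases i with i | i <;> rcases j with j | j <;>
      simp [PNmat, PMmat, Matrix.one_apply]
  rw [psi_mul A B D z habs hAre hDre hAsym hDsym hQ, ← hKdef, ← hQidef, ← hQi'def,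
    hγz, hγz', hPN, ← hKdef, ← hQidef, ← hQi'def, fromBlocks_multiply, fromBlocks_multiply]
  simp only [Matrix.mul_one, Matrix.mul_zero, Matrix.zero_mul, add_zero, zero_add,
    Matrix.mul_neg, Matrix.neg_mul, neg_neg, fromBlocks_apply₂₂, Matrix.smul_apply,
    smul_eq_mul]
  have hc : (z⁻¹ - z) * (z - z⁻¹) = (z ^ 2 - 1) * ((z ^ 2)⁻¹ - 1) := by
    field_simp
  rw [hc]
end
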